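/- Let f : X → Y be a continuous surjective map between topological spaces, let y ∈ Y, and let p₁, p₂ be nontrivial sequences in Y converging to y. Define p₃ by interleaving: p₃(2n) = p₁(n) and p₃(2n+1) = p₂(n). Then p₃ converges to y, and every point x ∈ X admitting a sequence converging to x (in X) covering p₃ also admits sequences converging to x covering p₁ and covering p₂. In particular, the family {F(p) : p a nontrivial sequence converging to y} is a centered (finite intersection) family, where F(p) = {x ∈ X : some sequence in X converging to x covers p}. -/
import Mathlib


open Filter Topology

/-- A sequence `q` in `X` covers a sequence `p` in `Y` (w.r.t. `f`). -/
def Covers {X Y : Type*} (f : X → Y) (q : ℕ → X) (p : ℕ → Y) : Prop :=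
  ∀ n, f (q n) = p n

/-- `p` is a nontrivial sequence converging to `y`: it converges to `y`
and is not eventually constant. -/
def NontrivialConvTo {Y : Type*} [TopologicalSpace Y] (p : ℕ → Y) (y : Y) : Prop :=
  Tendsto p atTop (𝓝 y) ∧ ¬ ∃ N, ∀ n ≥ N, p n = p N

/-- Interleaving two nontrivial sequences converging to `y` gives a sequence converging
to `y`, and every point admitting a convergent lift of the interleaved sequence admits
convergent lifts of both original sequences; in particular
`F p₃ ⊆ F p₁ ∩ F p₂`, so the family `{F p}` is centered. -/
theorem interleave_centered {X Y : Type*} [TopologicalSpace X] [TopologicalSpace Y]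
    (f : X → Y) (hf : Continuous f) (hsurj : Function.Surjective f)
    (y : Y) (p₁ p₂ p₃ : ℕ → Y)
    (h₁ : NontrivialConvTo p₁ y) (h₂ : NontrivialConvTo p₂ y)
    (h₃even : ∀ n, p₃ (2 * n) = p₁ n) (h₃odd : ∀ n, p₃ (2 * n + 1) = p₂ n) :
    Tendsto p₃ atTop (𝓝 y) ∧
    ∀ x : X, (∃ q : ℕ → X, Tendsto q atTop (𝓝 x) ∧ Covers f q p₃) →
      (∃ q : ℕ → X, Tendsto q atTop (𝓝 x) ∧ Covers f q p₁) ∧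
      (∃ q : ℕ → X, Tendsto q atTop (𝓝 x) ∧ Covers f q p₂) := by
  have hmul : Tendsto (fun n => 2 * n) atTop atTop :=
    tendsto_atTop_atTop.mpr fun b => ⟨b, fun a ha => by omega⟩
  have hmul1 : Tendsto (fun n => 2 * n + 1) atTop atTop :=
    tendsto_atTop_atTop.mpr fun b => ⟨b, fun a ha => by omega⟩
  constructor
  · rw [tendsto_atTop'] at *
    intro s hs
    obtain ⟨N₁, hN₁⟩ := tendsto_atTop'.mp h₁.1 s hs
    obtain ⟨N₂, hN₂⟩ := tendsto_atTop'.mp h₂.1 s hs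
    refine ⟨2 * (max N₁ N₂) + 1, fun n hn => ?_⟩
    rcases Nat.even_or_odd n with ⟨k, hk⟩ | ⟨k, hk⟩
    · have : n = 2 * k := by omega
      rw [this, h₃even]
      exact hN₁ k (by omega)
    · have : n = 2 * k + 1 := by omega
      rw [this, h₃odd]
      exact hN₂ k (by omega)
  · rintro x ⟨q, hq, hcov⟩
    refine ⟨⟨fun n => q (2 * n), hq.comp hmul, fun n => by rw [hcov (2 * n), h₃even]⟩,
      ⟨fun n => q (2 * n + 1), hq.comp hmul1, fun n => by rw [hcov (2 * n + 1), h₃odd]⟩⟩
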